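/- Let R = ℂ[x,y,z]/(xz − y² + 1) be the coordinate ring of the Danielewski surface X. Then the module of Kähler differentials Ω_{R/ℂ} is a free R-module of rank 2; explicitly, the relation z·dx + x·dz − 2y·dy = 0 holds in Ω_{R/ℂ}, and one can exhibit two elements of Ω_{R/ℂ} forming an R-basis. -/

import Mathlib

set_option synthInstance.maxHeartbeats 1000000
set_option maxHeartbeats 2000000


open MvPolynomial

/-- The defining polynomial `xz − y² + 1` of the Danielewski surface `X`. -/
noncomputable def fX : MvPolynomial (Fin 3) ℂ := X 0 * X 2 - X 1 ^ 2 + 1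

/-- The coordinate ring `R = ℂ[x,y,z]/(xz − y² + 1)` of `X`. -/
abbrev RX := MvPolynomial (Fin 3) ℂ ⧸ Ideal.span {fX}

noncomputable def mkX : MvPolynomial (Fin 3) ℂ →+* RX := Ideal.Quotient.mk _


open KaehlerDifferential

noncomputable def xx : RX := mkX (X 0)
noncomputable def yy : RX := mkX (X 1)
noncomputable def zz : RX := mkX (X 2)
noncomputable def half : RX := algebraMap ℂ RX 2⁻¹

lemma keyH : (2 : RX) * half = 1 := by
  rw [half, show (2 : RX) = algebraMap ℂ RX 2 from (map_ofNat _ 2).symm, ← map_mul]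
  norm_num

lemma hbX : xx * zz - yy ^ 2 + 1 = 0 := by
  have hfx : mkX fX = 0 := by
    simpa [mkX] using (Ideal.Quotient.eq_zero_iff_mem).mpr (Ideal.subset_span rfl)
  have : mkX fX = xx * zz - yy ^ 2 + 1 := by
    simp [fX, xx, yy, zz, map_add, map_sub, map_mul, map_pow, map_one]
  rw [this] at hfx
  exact hfx

lemma hrelX : zz • (D ℂ RX) xx + xx • (D ℂ RX) zz - (2 * yy) • (D ℂ RX) yy = 0 := by
  have h0 : (D ℂ RX) (xx * zz - yy ^ 2 + 1) = 0 := by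
    rw [show xx * zz - yy ^ 2 + 1 = (0 : RX) from hbX]; simp
  simp only [Derivation.leibniz, Derivation.leibniz_pow, smul_smul, two_smul, add_smul,
    smul_add, map_add, map_sub, Derivation.map_one_eq_zero, pow_one] at h0
  linear_combination (norm := module) h0

/-- The presentation of `RX` as a `ℂ`-algebra with three variables and one relation. -/
noncomputable def presX : Algebra.Presentation ℂ RX (Fin 3) Unit where
  val i := mkX (X i)
  σ' := Function.surjInv Ideal.Quotient.mk_surjective
  aeval_val_σ' s := by
    have h : (aeval (R := ℂ) fun i => mkX (X i)) = (Ideal.Quotient.mkₐ ℂ (Ideal.span {fX})) := by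
      apply MvPolynomial.algHom_ext; intro i; simp [mkX]
    rw [h]
    exact Function.surjInv_eq Ideal.Quotient.mk_surjective s
  algebra := (aeval fun i => mkX (X i)).toAlgebra
  algebraMap_eq := rfl
  relation _ := fX
  span_range_relation_eq_ker := by
    have h : (aeval (R := ℂ) fun i => mkX (X i)) = (Ideal.Quotient.mkₐ ℂ (Ideal.span {fX})) := by
      apply MvPolynomial.algHom_ext; intro i; simp [mkX]
    show Ideal.span _ = RingHom.ker (aeval (R := ℂ) fun i => mkX (X i)).toRingHom
    rw [Set.range_const]
    exact (Ideal.mk_ker.symm).trans (congrArg (fun f : MvPolynomial (Fin 3) ℂ →ₐ[ℂ] RX => RingHom.ker f.toRingHom) h).symm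

noncomputable def ω₁ : Ω[RX⁄ℂ] := (-yy) • (D ℂ RX) xx + (2 * xx) • (D ℂ RX) yy
noncomputable def ω₂ : Ω[RX⁄ℂ] := (D ℂ RX) zz

noncomputable def varsol : Fin 3 → (Fin 2 → RX) :=
  ![![-yy, xx ^ 2], ![-(half * zz), half * xx * yy], ![0, 1]]

lemma relation_eq :
    (presX.differentialsRelations.relation () : Fin 3 →₀ RX) =
      Finsupp.single (0 : Fin 3) zz + Finsupp.single 1 (-(2 * yy)) + Finsupp.single 2 xx := by
  have hp0 : pderiv (0 : Fin 3) fX = X 2 := by simp [fX, pderiv_X]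
  have hp1 : pderiv (1 : Fin 3) fX = -(2 * X 1) := by simp [fX, pderiv_X]; try ring
  have hp2 : pderiv (2 : Fin 3) fX = X 0 := by simp [fX, pderiv_X]
  have key : ∀ i : Fin 3,
      (presX.differentialsRelations.relation () : Fin 3 →₀ RX) i = mkX (pderiv i fX) := by
    intro i
    show algebraMap presX.Ring RX (((mvPolynomialBasis ℂ (Fin 3)).repr (D _ _ fX)) i) = _
    rw [mvPolynomialBasis_repr_apply]
    show (aeval presX.val) (pderiv i fX) = mkX (pderiv i fX)
    have h : (aeval (R := ℂ) presX.val) = (Ideal.Quotient.mkₐ ℂ (Ideal.span {fX})) := by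
      apply MvPolynomial.algHom_ext; intro i; simp [presX, mkX]
    rw [h]; rfl
  have haux : ∀ i : Fin 3, (presX.differentialsRelations.relation () : Fin 3 →₀ RX) i =
      ((Finsupp.single (0 : Fin 3) zz + Finsupp.single 1 (-(2 * yy)) +
        Finsupp.single 2 xx : Fin 3 →₀ RX)) i := by
    intro i
    fin_cases i <;> simp [zz, yy, xx, mkX, Finsupp.single_apply]
    · exact (key 0).trans (by rw [hp0]; rfl)
    · exact (key 1).trans (by rw [hp1]; simp [mkX, map_ofNat])
    · exact (key 2).trans (by rw [hp2]; rfl)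
  exact Finsupp.ext haux

noncomputable def solX : presX.differentialsRelations.Solution (Fin 2 → RX) where
  var := varsol
  linearCombination_var_relation := by
    rintro ⟨⟩
    rw [relation_eq]
    show Finsupp.linearCombination (α := Fin 3) RX varsol (Finsupp.single 0 zz + Finsupp.single 1 (-(2*yy)) + Finsupp.single 2 xx) = 0
    simp only [map_add, Finsupp.linearCombination_single]
    funext j
    fin_cases j
    · simp [varsol]
      linear_combination (yy * zz : RX) * keyH
    · simp [varsol]
      linear_combination (-(xx * yy ^ 2) : RX) * keyH + xx * hbX

noncomputable def fmap : Ω[RX⁄ℂ] →ₗ[RX] (Fin 2 → RX) :=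
  presX.differentialsSolution_isPresentation.desc solX

lemma fmap_D (i : Fin 3) : fmap ((D ℂ RX) (mkX (X i))) = varsol i :=
  presX.differentialsSolution_isPresentation.desc_var solX i

noncomputable def gmap : (Fin 2 → RX) →ₗ[RX] Ω[RX⁄ℂ] :=
  (LinearMap.proj (0 : Fin 2)).smulRight ω₁ + (LinearMap.proj (1 : Fin 2)).smulRight ω₂

lemma gmap_apply (v : Fin 2 → RX) : gmap v = v 0 • ω₁ + v 1 • ω₂ := rfl

lemma hspanX : Submodule.span RX (Set.range fun i : Fin 3 => (D ℂ RX) (mkX (X i))) = ⊤ := by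
  have hsurj := presX.differentialsSolution_isPresentation.surjective_π
  have h := presX.differentialsSolution.range_π
  rw [LinearMap.range_eq_top.mpr hsurj] at h
  exact h.symm

lemma gf_D (i : Fin 3) : gmap (fmap ((D ℂ RX) (mkX (X i)))) = (D ℂ RX) (mkX (X i)) := by
  rw [fmap_D, gmap_apply]
  have hx : (D ℂ RX) (mkX (X 0)) = (D ℂ RX) xx := rfl
  have hy : (D ℂ RX) (mkX (X 1)) = (D ℂ RX) yy := rfl
  have hz : (D ℂ RX) (mkX (X 2)) = (D ℂ RX) zz := rfl
  fin_cases i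
  · show (-yy) • ω₁ + (xx ^ 2) • ω₂ = (D ℂ RX) xx
    have hsq : (yy ^ 2 - 1 - xx * zz) • ((D ℂ RX) xx) = (0 : RX) • ((D ℂ RX) xx) := by
      rw [show yy ^ 2 - 1 - xx * zz = 0 by linear_combination -hbX]
    rw [ω₁, ω₂]
    linear_combination (norm := module) xx • hrelX + hsq
  · show (-(half * zz)) • ω₁ + (half * xx * yy) • ω₂ = (D ℂ RX) yy
    have hscal : (2 * half * (yy ^ 2 - xx * zz) - 1) • ((D ℂ RX) yy)
        = (0 : RX) • ((D ℂ RX) yy) := by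
      rw [show 2 * half * (yy ^ 2 - xx * zz) - 1 = 0 by
        linear_combination (-(2 * half)) * hbX + keyH]
    rw [ω₁, ω₂]
    linear_combination (norm := module) (half * yy) • hrelX + hscal
  · show (0 : RX) • ω₁ + (1 : RX) • ω₂ = (D ℂ RX) zz
    rw [ω₂]
    module

lemma fg_basis (j : Fin 2) : fmap (gmap (Pi.single j 1)) = Pi.single j 1 := by
  fin_cases j
  · show fmap (gmap (Pi.single (0 : Fin 2) 1)) = Pi.single (0 : Fin 2) 1
    rw [gmap_apply]
    simp only [Pi.single_eq_same, Pi.single_eq_of_ne (by decide : (1 : Fin 2) ≠ 0)]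
    rw [one_smul RX ω₁, zero_smul RX ω₂, add_zero, ω₁]
    rw [map_add, map_smul, map_smul]
    rw [show (D ℂ RX) xx = (D ℂ RX) (mkX (X 0)) from rfl,
      show (D ℂ RX) yy = (D ℂ RX) (mkX (X 1)) from rfl, fmap_D, fmap_D]
    funext j
    fin_cases j
    · show ((-yy) • varsol 0 + (2 * xx) • varsol 1) 0 = (Pi.single (0 : Fin 2) (1 : RX) : Fin 2 → RX) 0
      simp [varsol]
      linear_combination (-1 : RX) * hbX + (-(xx * zz)) * keyH
    · show ((-yy) • varsol 0 + (2 * xx) • varsol 1) 1 = (Pi.single (0 : Fin 2) (1 : RX) : Fin 2 → RX) 1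
      simp [varsol]
      linear_combination (xx ^ 2 * yy : RX) * keyH
  · show fmap (gmap (Pi.single (1 : Fin 2) 1)) = Pi.single (1 : Fin 2) 1
    rw [gmap_apply]
    simp only [Pi.single_eq_same, Pi.single_eq_of_ne (by decide : (0 : Fin 2) ≠ 1)]
    rw [one_smul RX ω₂, zero_smul RX ω₁, zero_add, ω₂]
    rw [show (D ℂ RX) zz = (D ℂ RX) (mkX (X 2)) from rfl, fmap_D]
    funext j
    fin_cases j
    · show varsol 2 0 = (Pi.single (1 : Fin 2) (1 : RX) : Fin 2 → RX) 0
      simp [varsol]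
    · show varsol 2 1 = (Pi.single (1 : Fin 2) (1 : RX) : Fin 2 → RX) 1
      simp [varsol]

noncomputable def eqvX : (Fin 2 → RX) ≃ₗ[RX] Ω[RX⁄ℂ] := by
  refine LinearEquiv.ofLinear gmap fmap ?_ ?_
  · apply LinearMap.ext_on hspanX
    rintro _ ⟨i, rfl⟩
    exact gf_D i
  · apply Module.Basis.ext (Pi.basisFun RX (Fin 2))
    intro i
    simpa [Pi.basisFun_apply] using fg_basis i

/-- For `R = ℂ[x,y,z]/(xz − y² + 1)`, the module of Kähler differentials `Ω_{R/ℂ}`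
satisfies the relation `z·dx + x·dz − 2y·dy = 0` and is a free `R`-module of rank 2. -/
theorem kaehler_RX_free_rank_two :
    (mkX (X 2) • (KaehlerDifferential.D ℂ RX) (mkX (X 0)) +
      mkX (X 0) • (KaehlerDifferential.D ℂ RX) (mkX (X 2)) -
      (2 * mkX (X 1)) • (KaehlerDifferential.D ℂ RX) (mkX (X 1)) = 0) ∧
    Nonempty (Module.Basis (Fin 2) RX (Ω[RX⁄ℂ])) := by
  exact ⟨hrelX, ⟨(Pi.basisFun RX (Fin 2)).map eqvX⟩⟩
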